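/- Let p ≥ 1, let a₁, …, a_p > 0 be reals, let d₁, …, d_p be positive integers, and let β > 0 satisfy β < Σ_{k=1}^p a_k d_k. Then the iterated integral ∫₀² … ∫₀² (Σ_{k=1}^p r_k^{1/a_k})^{-β} Π_{k=1}^p r_k^{d_k - 1} dr₁ … dr_p is finite. -/

import Mathlib

open MeasureTheory Real

theorem stmt16 (p : ℕ) (hp : 1 ≤ p) (a : Fin p → ℝ) (d : Fin p → ℕ)
    (ha : ∀ k, 0 < a k) (hd : ∀ k, 0 < d k) (β : ℝ) (hβ0 : 0 < β)
    (hβ : β < ∑ k, a k * (d k : ℝ)) :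
    IntegrableOn (fun r : Fin p → ℝ =>
        (∑ k, (r k) ^ (1 / a k)) ^ (-β) * ∏ k, (r k) ^ ((d k : ℝ) - 1))
      (Set.univ.pi fun _ => Set.Ioo (0:ℝ) 2) volume := by
  have hne : Nonempty (Fin p) := ⟨⟨0, hp⟩⟩
  set S : ℝ := ∑ k, a k * (d k : ℝ) with hSdef
  have hS0 : 0 < S := hβ0.trans hβ
  set c : Fin p → ℝ := fun k => (d k : ℝ) - 1 - β * (d k : ℝ) / S with hcdef
  have hc1 : ∀ k, -1 < c k := by
    intro k
    have hdk : (1 : ℝ) ≤ (d k : ℝ) := by exact_mod_cast hd k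
    have h1 : β / S < 1 := (div_lt_one hS0).2 hβ
    have h2 : 0 < (d k : ℝ) * (1 - β / S) := mul_pos (by linarith) (by linarith)
    have h3 : β * (d k : ℝ) / S = (d k : ℝ) * (β / S) := by ring
    simp only [hcdef, h3]
    nlinarith
  -- weights for AM-GM
  set w : Fin p → ℝ := fun k => a k * (d k : ℝ) / S with hwdef
  have hw0 : ∀ k, 0 ≤ w k := fun k =>
    div_nonneg (mul_nonneg (ha k).le (Nat.cast_nonneg _)) hS0.le
  have hwsum : ∑ k, w k = 1 := by
    rw [hwdef, ← Finset.sum_div, ← hSdef, div_self hS0.ne']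
  have hw1 : ∀ k, w k ≤ 1 := by
    intro k
    rw [hwdef, div_le_one hS0]
    exact Finset.single_le_sum
      (fun i _ => mul_nonneg (ha i).le (Nat.cast_nonneg _)) (Finset.mem_univ k)
  -- the dominating function
  set g : (Fin p → ℝ) → ℝ := fun r => ∏ k, (r k) ^ (c k) with hgdef
  have hbox : MeasurableSet (Set.univ.pi fun _ : Fin p => Set.Ioo (0:ℝ) 2) :=
    MeasurableSet.univ_pi fun _ => measurableSet_Ioo
  have hg : IntegrableOn g (Set.univ.pi fun _ => Set.Ioo (0:ℝ) 2) volume := by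
    rw [← integrable_indicator_iff hbox]
    have hFi : ∀ k : Fin p, Integrable
        ((Set.Ioo (0:ℝ) 2).indicator fun x : ℝ => x ^ (c k)) volume := by
      intro k
      rw [integrable_indicator_iff measurableSet_Ioo]
      exact ((intervalIntegral.intervalIntegrable_rpow' (hc1 k) (a := 0) (b := 2)).1).mono_set
        Set.Ioo_subset_Ioc_self
    have hprod := Integrable.fintype_prod (f := fun k : Fin p =>
      (Set.Ioo (0:ℝ) 2).indicator fun x : ℝ => x ^ (c k)) hFi
    convert hprod using 1
    · rfl
    funext r
    by_cases hr : r ∈ Set.univ.pi fun _ : Fin p => Set.Ioo (0:ℝ) 2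
    · rw [Set.indicator_of_mem hr]
      exact Finset.prod_congr rfl fun k _ =>
        (Set.indicator_of_mem (hr k (Set.mem_univ k)) fun x => x ^ c k).symm
    · rw [Set.indicator_of_notMem hr]
      obtain ⟨k, hk⟩ : ∃ k, r k ∉ Set.Ioo (0:ℝ) 2 := by
        by_contra h
        push_neg at h
        exact hr (Set.mem_univ_pi.2 h)
      exact (Finset.prod_eq_zero (Finset.mem_univ k)
        (Set.indicator_of_notMem hk _)).symm
    rfl
  -- measurability of the integrand via continuity on the box
  have hmeas : AEStronglyMeasurable (fun r : Fin p → ℝ =>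
      (∑ k, (r k) ^ (1 / a k)) ^ (-β) * ∏ k, (r k) ^ ((d k : ℝ) - 1))
      (volume.restrict (Set.univ.pi fun _ : Fin p => Set.Ioo (0:ℝ) 2)) := by
    apply ContinuousOn.aestronglyMeasurable ?_ hbox
    intro r hr
    have hrk : ∀ k, 0 < r k := fun k => (hr k (Set.mem_univ k)).1
    have hca : ContinuousAt (fun r : Fin p → ℝ =>
        (∑ k, (r k) ^ (1 / a k)) ^ (-β) * ∏ k, (r k) ^ ((d k : ℝ) - 1)) r := by
      apply ContinuousAt.mul
      · apply ContinuousAt.rpow_const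
        · exact tendsto_finset_sum _ fun k _ =>
            (continuous_apply k).continuousAt.rpow_const (Or.inl (hrk k).ne')
        · left
          exact (Finset.sum_pos (fun k _ => rpow_pos_of_pos (hrk k) _)
            Finset.univ_nonempty).ne'
      · exact tendsto_finset_prod _ fun k _ =>
          (continuous_apply k).continuousAt.rpow_const (Or.inl (hrk k).ne')
    exact hca.continuousWithinAt
  -- domination
  refine hg.mono' hmeas ?_
  rw [ae_restrict_iff' hbox]
  filter_upwards with r hr
  have hrk : ∀ k, 0 < r k := fun k => (hr k (Set.mem_univ k)).1
  set z : Fin p → ℝ := fun k => (r k) ^ (1 / a k) with hzdef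
  have hz0 : ∀ k, 0 < z k := fun k => rpow_pos_of_pos (hrk k) _
  have hsum0 : 0 < ∑ k, z k := Finset.sum_pos (fun k _ => hz0 k) Finset.univ_nonempty
  have hprod0 : 0 < ∏ k, (z k) ^ (w k) :=
    Finset.prod_pos fun k _ => rpow_pos_of_pos (hz0 k) _
  have hamgm : ∏ k, (z k) ^ (w k) ≤ ∑ k, z k := by
    refine le_trans (Real.geom_mean_le_arith_mean_weighted Finset.univ w z
      (fun k _ => hw0 k) hwsum (fun k _ => (hz0 k).le)) ?_
    exact Finset.sum_le_sum fun k _ => mul_le_of_le_one_left (hz0 k).le (hw1 k)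
  have hkey : (∑ k, z k) ^ (-β) ≤ ∏ k, (r k) ^ (-(β * (d k : ℝ) / S)) := by
    refine le_trans (rpow_le_rpow_of_nonpos hprod0 hamgm (neg_nonpos.2 hβ0.le)) ?_
    rw [← Real.finset_prod_rpow _ _ (fun k _ => (rpow_pos_of_pos (hz0 k) _).le)]
    apply le_of_eq
    refine Finset.prod_congr rfl fun k _ => ?_
    simp only [hzdef, hwdef]
    rw [← Real.rpow_mul (hrk k).le, ← Real.rpow_mul (hrk k).le]
    congr 1
    field_simp [(ha k).ne', hS0.ne']
  have hprodnn : 0 ≤ ∏ k, (r k) ^ ((d k : ℝ) - 1) :=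
    Finset.prod_nonneg fun k _ => (rpow_pos_of_pos (hrk k) _).le
  have hfnn : 0 ≤ (∑ k, (r k) ^ (1 / a k)) ^ (-β) * ∏ k, (r k) ^ ((d k : ℝ) - 1) :=
    mul_nonneg (rpow_nonneg hsum0.le _) hprodnn
  rw [Real.norm_of_nonneg hfnn]
  calc (∑ k, (r k) ^ (1 / a k)) ^ (-β) * ∏ k, (r k) ^ ((d k : ℝ) - 1)
      ≤ (∏ k, (r k) ^ (-(β * (d k : ℝ) / S))) * ∏ k, (r k) ^ ((d k : ℝ) - 1) :=
        mul_le_mul_of_nonneg_right hkey hprodnn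
    _ = g r := by
        rw [hgdef, ← Finset.prod_mul_distrib]
        refine Finset.prod_congr rfl fun k _ => ?_
        rw [← Real.rpow_add (hrk k)]
        congr 1
        simp only [hcdef]
        ring
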